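/- Let (Ω, ℙ) be a probability space and let F : ℝ^d → ℝ be differentiable with L-Lipschitz gradient: ‖∇F(x) − ∇F(y)‖ ≤ L‖x − y‖ for all x, y. Let x* ∈ ℝ^d with ∇F(x*) = 0, let x¹, …, x^M ∈ ℝ^d with average x̄ = (1/M)Σ_m x^m and V = (1/M)Σ_m ‖x^m − x̄‖², and let G¹, …, G^M : Ω → ℝ^d be independent square-integrable random vectors with 𝔼[G^m] = ∇F(x^m) and 𝔼‖G^m − ∇F(x^m)‖² ≤ σ² + ρ‖∇F(x^m)‖² for each m, where σ, ρ ≥ 0. Then 𝔼‖(1/M)Σ_{m=1}^M G^m − (1/M)Σ_{m=1}^M ∇F(x^m)‖² ≤ σ²/M + (ρL²/M)·V + (ρL²/M)·‖x̄ − x*‖². -/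

import Mathlib

open MeasureTheory ProbabilityTheory Finset

lemma inner_memLp_integrable_aux {Ω : Type*} [MeasurableSpace Ω] {P : Measure Ω}
    {d : ℕ} {f g : Ω → EuclideanSpace ℝ (Fin d)} (hf : MemLp f 2 P) (hg : MemLp g 2 P) :
    Integrable (fun ω => (inner ℝ (f ω) (g ω) : ℝ)) P := by
  have h := MeasureTheory.L2.integrable_inner (𝕜 := ℝ) (hf.toLp f) (hg.toLp g)
  refine h.congr ?_
  filter_upwards [hf.coeFn_toLp, hg.coeFn_toLp] with ω h1 h2
  rw [h1, h2]

/-- Lemma 6: under the strong growth condition on the stochastic gradient oracle,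
the variance of the averaged stochastic gradient of `M` independent workers is
bounded by `σ²/M + (ρL²/M)V + (ρL²/M)‖x̄ − x*‖²`. -/
theorem stmt_9 {Ω : Type*} [MeasurableSpace Ω] (P : Measure Ω) [IsProbabilityMeasure P]
    (d : ℕ) (F : EuclideanSpace ℝ (Fin d) → ℝ) (F' : EuclideanSpace ℝ (Fin d) → EuclideanSpace ℝ (Fin d))
    (L : ℝ)
    (hFdiff : ∀ z, HasGradientAt F (F' z) z)
    (hLip : ∀ x y, ‖F' x - F' y‖ ≤ L * ‖x - y‖)
    (xstar : EuclideanSpace ℝ (Fin d)) (hopt : F' xstar = 0)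
    (M : ℕ) (hM : 0 < M) (x : Fin M → EuclideanSpace ℝ (Fin d))
    (xbar : EuclideanSpace ℝ (Fin d)) (V : ℝ)
    (hxbar : xbar = (M : ℝ)⁻¹ • ∑ m, x m)
    (hV : V = (M : ℝ)⁻¹ * ∑ m, ‖x m - xbar‖ ^ 2)
    (G : Fin M → Ω → EuclideanSpace ℝ (Fin d))
    (hind : iIndepFun G P)
    (hL2 : ∀ m, MemLp (G m) 2 P)
    (hmean : ∀ m, ∫ ω, G m ω ∂P = F' (x m))
    (σ ρ : ℝ) (hσ : 0 ≤ σ) (hρ : 0 ≤ ρ)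
    (hvar : ∀ m, ∫ ω, ‖G m ω - F' (x m)‖ ^ 2 ∂P ≤ σ ^ 2 + ρ * ‖F' (x m)‖ ^ 2) :
    ∫ ω, ‖(M : ℝ)⁻¹ • ∑ m, G m ω - (M : ℝ)⁻¹ • ∑ m, F' (x m)‖ ^ 2 ∂P
      ≤ σ ^ 2 / M + ρ * L ^ 2 / M * V + ρ * L ^ 2 / M * ‖xbar - xstar‖ ^ 2 := by
  have hMne : (M : ℝ) ≠ 0 := Nat.cast_ne_zero.mpr hM.ne'
  have hMpos : (0 : ℝ) < M := Nat.cast_pos.mpr hM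
  set c : Fin M → EuclideanSpace ℝ (Fin d) := fun m => F' (x m) with hc
  set Y : Fin M → Ω → EuclideanSpace ℝ (Fin d) := fun m ω => G m ω - c m with hY
  have hYmem : ∀ m, MemLp (Y m) 2 P := fun m => (hL2 m).sub (memLp_const _)
  have hYint : ∀ m, Integrable (Y m) P :=
    fun m => ((hL2 m).integrable one_le_two).sub (integrable_const _)
  have hYmean : ∀ m, ∫ ω, Y m ω ∂P = 0 := by
    intro m
    rw [hY]
    rw [integral_sub ((hL2 m).integrable one_le_two) (integrable_const _), hmean,
      integral_const, probReal_univ, one_smul, sub_self]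
  -- cross terms vanish
  have hcross : ∀ m k, m ≠ k → ∫ ω, (inner ℝ (Y m ω) (Y k ω) : ℝ) ∂P = 0 := by
    intro m k hmk
    have hproj : ∀ (a : EuclideanSpace ℝ (Fin d)) (i : Fin d),
        Measurable fun v : EuclideanSpace ℝ (Fin d) => v i - a i :=
      fun a i => ((EuclideanSpace.proj (𝕜 := ℝ) i).measurable).sub measurable_const
    have hcoordint : ∀ m (i : Fin d), Integrable (fun ω => G m ω i - c m i) P := by
      intro m i
      have := ContinuousLinearMap.integrable_comp (EuclideanSpace.proj (𝕜 := ℝ) i) (hYint m)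
      simpa [hY] using this
    have hcoordmean : ∀ m (i : Fin d), ∫ ω, (G m ω i - c m i) ∂P = 0 := by
      intro m i
      have := (ContinuousLinearMap.integral_comp_comm (EuclideanSpace.proj (𝕜 := ℝ) i) (hYint m))
      rw [hYmean m] at this
      simpa [hY] using this
    have hIi : ∀ i : Fin d, IndepFun (fun ω => G m ω i - c m i) (fun ω => G k ω i - c k i) P :=
      fun i => (hind.indepFun hmk).comp (hproj (c m) i) (hproj (c k) i)
    have hprodint : ∀ i : Fin d,
        Integrable (fun ω => (G m ω i - c m i) * (G k ω i - c k i)) P :=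
      fun i => (hIi i).integrable_mul (hcoordint m i) (hcoordint k i)
    have hexp : ∀ ω, (inner ℝ (Y m ω) (Y k ω) : ℝ)
        = ∑ i, (G m ω i - c m i) * (G k ω i - c k i) := by
      intro ω
      simp [hY, PiLp.inner_apply, RCLike.inner_apply, conj_trivial]
      exact Finset.sum_congr rfl fun i _ => mul_comm _ _
    simp_rw [hexp]
    rw [integral_finset_sum _ fun i _ => hprodint i]
    refine Finset.sum_eq_zero fun i _ => ?_
    have h2 : ∫ ω, (G m ω i - c m i) * (G k ω i - c k i) ∂P
        = (∫ ω, (G m ω i - c m i) ∂P) * ∫ ω, (G k ω i - c k i) ∂P :=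
      IndepFun.integral_fun_mul_eq_mul_integral (hIi i) (hcoordint m i).aestronglyMeasurable (hcoordint k i).aestronglyMeasurable
    rw [h2, hcoordmean m i, zero_mul]
  -- expansion of the variance of the sum
  have hip : ∀ m k : Fin M, Integrable (fun ω => (inner ℝ (Y m ω) (Y k ω) : ℝ)) P :=
    fun m k => inner_memLp_integrable_aux (hYmem m) (hYmem k)
  have key : ∫ ω, ‖∑ m, Y m ω‖ ^ 2 ∂P = ∑ m, ∫ ω, ‖Y m ω‖ ^ 2 ∂P := by
    calc ∫ ω, ‖∑ m, Y m ω‖ ^ 2 ∂P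
        = ∫ ω, ∑ m, ∑ k, (inner ℝ (Y m ω) (Y k ω) : ℝ) ∂P := by
          congr 1; funext ω
          rw [← real_inner_self_eq_norm_sq, sum_inner]
          exact Finset.sum_congr rfl fun m _ => inner_sum _ _ _
      _ = ∑ m, ∑ k, ∫ ω, (inner ℝ (Y m ω) (Y k ω) : ℝ) ∂P := by
          rw [integral_finset_sum _ fun m _ => integrable_finset_sum _ fun k _ => hip m k]
          exact Finset.sum_congr rfl fun m _ => integral_finset_sum _ fun k _ => hip m k
      _ = ∑ m, ∫ ω, ‖Y m ω‖ ^ 2 ∂P := by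
          refine Finset.sum_congr rfl fun m _ => ?_
          rw [Finset.sum_eq_single_of_mem m (mem_univ m) fun k _ hk => hcross m k (Ne.symm hk)]
          simp_rw [real_inner_self_eq_norm_sq]
  -- rewrite the left-hand side
  have hlhs : ∫ ω, ‖(M : ℝ)⁻¹ • ∑ m, G m ω - (M : ℝ)⁻¹ • ∑ m, F' (x m)‖ ^ 2 ∂P
      = ((M : ℝ)⁻¹) ^ 2 * ∑ m, ∫ ω, ‖Y m ω‖ ^ 2 ∂P := by
    have hsm := integral_smul (μ := P) (((M : ℝ)⁻¹) ^ 2) (fun ω => ‖∑ m, Y m ω‖ ^ 2)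
    simp only [smul_eq_mul] at hsm
    rw [← key, ← hsm]
    congr 1; funext ω
    have : (M : ℝ)⁻¹ • ∑ m, G m ω - (M : ℝ)⁻¹ • ∑ m, F' (x m)
        = (M : ℝ)⁻¹ • ∑ m, Y m ω := by
      rw [← smul_sub, ← Finset.sum_sub_distrib]
    rw [this, norm_smul, mul_pow]
    congr 1
    rw [norm_inv, Real.norm_natCast]
  -- bias-variance decomposition of the points
  have hsumzero : ∑ m, (x m - xbar) = 0 := by
    rw [Finset.sum_sub_distrib, Finset.sum_const, Finset.card_univ, Fintype.card_fin,
      hxbar, ← Nat.cast_smul_eq_nsmul ℝ, smul_smul, mul_inv_cancel₀ hMne, one_smul, sub_self]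
  have hbv : ∑ m, ‖x m - xstar‖ ^ 2 = (∑ m, ‖x m - xbar‖ ^ 2) + M * ‖xbar - xstar‖ ^ 2 := by
    calc ∑ m, ‖x m - xstar‖ ^ 2
        = ∑ m, (‖x m - xbar‖ ^ 2 + 2 * (inner ℝ (x m - xbar) (xbar - xstar) : ℝ)
            + ‖xbar - xstar‖ ^ 2) := by
          refine Finset.sum_congr rfl fun m _ => ?_
          rw [← norm_add_sq_real, sub_add_sub_cancel]
      _ = (∑ m, ‖x m - xbar‖ ^ 2) + M * ‖xbar - xstar‖ ^ 2 := by
          rw [Finset.sum_add_distrib, Finset.sum_add_distrib, ← Finset.mul_sum,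
            ← sum_inner, hsumzero, inner_zero_left, mul_zero, add_zero,
            Finset.sum_const, Finset.card_univ, Fintype.card_fin, nsmul_eq_mul]
  -- bound on each gradient norm
  have hgrad : ∀ m, ‖F' (x m)‖ ^ 2 ≤ L ^ 2 * ‖x m - xstar‖ ^ 2 := by
    intro m
    have h := hLip (x m) xstar
    rw [hopt, sub_zero] at h
    calc ‖F' (x m)‖ ^ 2 ≤ (L * ‖x m - xstar‖) ^ 2 := pow_le_pow_left₀ (norm_nonneg _) h 2
      _ = L ^ 2 * ‖x m - xstar‖ ^ 2 := by ring
  -- bound the sum of variances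
  have hT : ∑ m, ∫ ω, ‖Y m ω‖ ^ 2 ∂P
      ≤ M * σ ^ 2 + ρ * L ^ 2 * (M * V) + ρ * L ^ 2 * (M * ‖xbar - xstar‖ ^ 2) := by
    have h1 : ∑ m, ∫ ω, ‖Y m ω‖ ^ 2 ∂P ≤ ∑ m, (σ ^ 2 + ρ * ‖F' (x m)‖ ^ 2) :=
      Finset.sum_le_sum fun m _ => hvar m
    have h2 : ∑ m, (σ ^ 2 + ρ * ‖F' (x m)‖ ^ 2)
        ≤ M * σ ^ 2 + ρ * (L ^ 2 * ∑ m, ‖x m - xstar‖ ^ 2) := by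
      rw [Finset.sum_add_distrib, Finset.sum_const, Finset.card_univ, Fintype.card_fin,
        nsmul_eq_mul, ← Finset.mul_sum]
      refine add_le_add_right (mul_le_mul_of_nonneg_left ?_ hρ) _
      rw [Finset.mul_sum]
      exact Finset.sum_le_sum fun m _ => hgrad m
    have h3 : ∑ m, ‖x m - xbar‖ ^ 2 = M * V := by
      rw [hV]; field_simp
    calc ∑ m, ∫ ω, ‖Y m ω‖ ^ 2 ∂P
        ≤ M * σ ^ 2 + ρ * (L ^ 2 * ∑ m, ‖x m - xstar‖ ^ 2) := le_trans h1 h2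
      _ = M * σ ^ 2 + ρ * L ^ 2 * (M * V) + ρ * L ^ 2 * (M * ‖xbar - xstar‖ ^ 2) := by
          rw [hbv, h3]; ring
  rw [hlhs]
  have hrhs : σ ^ 2 / M + ρ * L ^ 2 / M * V + ρ * L ^ 2 / M * ‖xbar - xstar‖ ^ 2
      = ((M : ℝ)⁻¹) ^ 2 * (M * σ ^ 2 + ρ * L ^ 2 * (M * V)
          + ρ * L ^ 2 * (M * ‖xbar - xstar‖ ^ 2)) := by
    field_simp
  rw [hrhs]
  exact mul_le_mul_of_nonneg_left hT (by positivity)
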